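/- Let A, B be m×n matrices over a field with rank(A - B) ≥ d, and let U_A, U_B ≤ F^{m+n} be the row spaces of the m×(m+n) matrices [I_m | A] and [I_m | B] respectively (I_m the m×m identity). Then dim(U_A ∩ U_B) ≤ m - d, i.e., the subspace distance satisfies d_s(U_A, U_B) ≥ 2d. -/

import Mathlib

open Module

/-- Lifting translates rank distance into subspace distance: if `rank (A - B) ≥ d` and
`U_A`, `U_B` are the row spaces of `[I | A]` and `[I | B]`, then
`dim (U_A ∩ U_B) ≤ m - d`, i.e. `d_s(U_A, U_B) ≥ 2d`. -/
theorem lifting_rank_to_subspace_distance {F : Type*} [Field F] {m n d : ℕ}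
    (A B : Matrix (Fin m) (Fin n) F) (hAB : d ≤ (A - B).rank) :
    (finrank F ↥(LinearMap.range (Matrix.fromCols (1 : Matrix (Fin m) (Fin m) F) A).vecMulLinear ⊓
        LinearMap.range (Matrix.fromCols (1 : Matrix (Fin m) (Fin m) F) B).vecMulLinear) : ℤ)
      ≤ (m : ℤ) - d ∧
    (2 * d : ℤ) ≤
      finrank F ↥(LinearMap.range (Matrix.fromCols (1 : Matrix (Fin m) (Fin m) F) A).vecMulLinear)
      + finrank F ↥(LinearMap.range (Matrix.fromCols (1 : Matrix (Fin m) (Fin m) F) B).vecMulLinear)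
      - 2 * finrank F ↥(LinearMap.range (Matrix.fromCols (1 : Matrix (Fin m) (Fin m) F) A).vecMulLinear ⊓
          LinearMap.range (Matrix.fromCols (1 : Matrix (Fin m) (Fin m) F) B).vecMulLinear) := by
  classical
  set LA := (Matrix.fromCols (1 : Matrix (Fin m) (Fin m) F) A).vecMulLinear with hLA
  set LB := (Matrix.fromCols (1 : Matrix (Fin m) (Fin m) F) B).vecMulLinear with hLB
  -- evaluation lemmas
  have hevalA : ∀ (x : Fin m → F) (i : Fin m), LA x (Sum.inl i) = x i := by
    intro x i
    simp [hLA, Matrix.vecMul_fromCols]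
  have hevalA' : ∀ (x : Fin m → F) (j : Fin n), LA x (Sum.inr j) = Matrix.vecMul x A j := by
    intro x j; simp [hLA, Matrix.vecMul_fromCols]
  have hevalB : ∀ (x : Fin m → F) (i : Fin m), LB x (Sum.inl i) = x i := by
    intro x i; simp [hLB, Matrix.vecMul_fromCols]
  have hevalB' : ∀ (x : Fin m → F) (j : Fin n), LB x (Sum.inr j) = Matrix.vecMul x B j := by
    intro x j; simp [hLB, Matrix.vecMul_fromCols]
  have hinjA : Function.Injective LA := by
    rw [← LinearMap.ker_eq_bot]
    ext x
    simp only [LinearMap.mem_ker, Submodule.mem_bot]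
    constructor
    · intro h
      funext i
      have := congrFun h (Sum.inl i)
      simpa [hevalA] using this
    · rintro rfl; simp
  have hinjB : Function.Injective LB := by
    rw [← LinearMap.ker_eq_bot]
    ext x
    simp only [LinearMap.mem_ker, Submodule.mem_bot]
    constructor
    · intro h
      funext i
      have := congrFun h (Sum.inl i)
      simpa [hevalB] using this
    · rintro rfl; simp
  have hrA : finrank F ↥(LinearMap.range LA) = m := by
    rw [LinearMap.finrank_range_of_inj hinjA]; simp
  have hrB : finrank F ↥(LinearMap.range LB) = m := by
    rw [LinearMap.finrank_range_of_inj hinjB]; simp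
  -- the map from the intersection to the kernel of (A-B).vecMulLinear
  set K := LinearMap.ker (A - B).vecMulLinear with hK
  set φ : ↥(LinearMap.range LA ⊓ LinearMap.range LB) →ₗ[F] (Fin m → F) :=
    { toFun := fun y => fun i => (y : (Fin m ⊕ Fin n) → F) (Sum.inl i)
      map_add' := by intros; rfl
      map_smul' := by intros; rfl } with hφ
  have hφmem : ∀ y, φ y ∈ K := by
    rintro ⟨y, hy1, hy2⟩
    obtain ⟨x1, rfl⟩ := hy1
    obtain ⟨x2, hx2⟩ := hy2
    have hx12 : x2 = x1 := by
      funext i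
      have := congrFun hx2 (Sum.inl i)
      rw [hevalB, hevalA] at this; exact this
    subst hx12
    have hxφ : φ ⟨LA x2, ⟨x2, rfl⟩, ⟨x2, hx2⟩⟩ = x2 := by
      funext i; exact hevalA x2 i
    rw [hxφ, hK, LinearMap.mem_ker]
    funext j
    have := congrFun hx2 (Sum.inr j)
    rw [hevalB', hevalA'] at this
    simp only [Matrix.vecMulLinear_apply, Matrix.vecMul_sub, Pi.zero_apply, Pi.sub_apply]
    rw [this]
    ring
  set ψ : ↥(LinearMap.range LA ⊓ LinearMap.range LB) →ₗ[F] ↥K :=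
    φ.codRestrict K hφmem with hψ
  have hinjψ : Function.Injective ψ := by
    rw [← LinearMap.ker_eq_bot]
    ext y
    simp only [LinearMap.mem_ker, Submodule.mem_bot]
    constructor
    · intro h
      have h0 : φ y = 0 := congrArg Subtype.val h
      obtain ⟨y, hy1, hy2⟩ := y
      obtain ⟨x1, rfl⟩ := hy1
      have hx0 : x1 = 0 := by
        funext i
        have := congrFun h0 i
        simpa [hφ, hevalA] using this
      subst hx0
      ext; simp
    · rintro rfl; simp
  have hdim : finrank F ↥(LinearMap.range LA ⊓ LinearMap.range LB) ≤ finrank F ↥K :=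
    LinearMap.finrank_le_finrank_of_injective hinjψ
  -- kernel dimension: m - rank (A - B)
  have hrank : finrank F ↥(LinearMap.range (A - B).vecMulLinear) = (A - B).rank := by
    rw [← Matrix.mulVecLin_transpose]
    have h1 : (Matrix.transpose (A - B)).rank
        = finrank F ↥(LinearMap.range (Matrix.transpose (A - B)).mulVecLin) := rfl
    rw [← h1, Matrix.rank_transpose]
  have hrn := LinearMap.finrank_range_add_finrank_ker (A - B).vecMulLinear
  rw [hrank] at hrn
  simp only [finrank_fintype_fun_eq_card, Fintype.card_fin] at hrn
  have hkey : finrank F ↥(LinearMap.range LA ⊓ LinearMap.range LB) + d ≤ m := by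
    calc finrank F ↥(LinearMap.range LA ⊓ LinearMap.range LB) + d
        ≤ finrank F ↥K + (A - B).rank := Nat.add_le_add hdim hAB
      _ = m := by rw [hK]; omega
  constructor
  · have := Int.ofNat_le.mpr hkey
    push_cast at this ⊢
    linarith
  · have := Int.ofNat_le.mpr hkey
    rw [hrA, hrB]
    push_cast at this ⊢
    linarith
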